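/- Let $k$ be a field and $(R, m)$ a local $k$-algebra. The set $\mathcal{M}_R = \{x \in R \mid \delta(x) \in m \text{ for all } \delta \in D_k(R)\}$ is a proper ideal of $R$, is a $D_k(R)$-submodule of $R$, and contains every proper $D_k(R)$-submodule of $R$. In particular, $R$ is simple as a $D_k(R)$-module if and only if $\mathcal{M}_R = 0$. -/
import Mathlib


def IsDiffOp (S : Type*) [CommSemiring S] {N M : Type*} [AddCommGroup N] [AddCommGroup M]
    [Module S N] [Module S M] : ℕ → (N → M) → Prop
  | 0, φ => ∃ ψ : N →ₗ[S] M, ∀ x, φ x = ψ x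
  | n + 1, φ => ∀ s : S, IsDiffOp S n (fun x => φ (s • x) - s • φ x)

/-- The set of `k`-linear differential operators on `R` (of some finite order),
viewed as a set of functions `R → R`. -/
def DiffOps (k R : Type*) [CommRing k] [CommRing R] [Algebra k R] : Set (R → R) :=
  {δ | IsLinearMap k δ ∧ ∃ n, IsDiffOp R n δ}

section Aux

variable {S : Type*} [CommSemiring S] {N M P : Type*} [AddCommGroup N] [AddCommGroup M]
  [AddCommGroup P] [Module S N] [Module S M] [Module S P]

lemma isDiffOp_congr {n : ℕ} {φ χ : N → M} (h : ∀ x, φ x = χ x) (hφ : IsDiffOp S n φ) :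
    IsDiffOp S n χ := by
  have : φ = χ := funext h
  rwa [← this]

lemma isDiffOp_add {n : ℕ} {φ χ : N → M} (hφ : IsDiffOp S n φ) (hχ : IsDiffOp S n χ) :
    IsDiffOp S n (fun x => φ x + χ x) := by
  induction n generalizing φ χ with
  | zero =>
    obtain ⟨ψ₁, h₁⟩ := hφ; obtain ⟨ψ₂, h₂⟩ := hχ
    exact ⟨ψ₁ + ψ₂, fun x => by simp [h₁, h₂]⟩
  | succ n ih =>
    intro s
    refine isDiffOp_congr (fun x => ?_) (ih (hφ s) (hχ s))
    simp only [smul_add]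
    abel

lemma additive_sub {φ : N → M} (hadd : ∀ a b, φ (a + b) = φ a + φ b) (a b : N) :
    φ (a - b) = φ a - φ b := by
  have := hadd (a - b) b
  rw [sub_add_cancel] at this
  exact eq_sub_of_add_eq this.symm

lemma comm_additive {φ : N → M} (hadd : ∀ a b, φ (a + b) = φ a + φ b) (s : S) (a b : N) :
    (fun x => φ (s • x) - s • φ x) (a + b)
      = (fun x => φ (s • x) - s • φ x) a + (fun x => φ (s • x) - s • φ x) b := by
  simp only [smul_add, hadd]
  abel

lemma isDiffOp_comp_linear {n : ℕ} (φ : M →ₗ[S] P) {ψ : N → M} (hψ : IsDiffOp S n ψ) :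
    IsDiffOp S n (fun x => φ (ψ x)) := by
  induction n generalizing ψ with
  | zero =>
    obtain ⟨ψ₀, h⟩ := hψ
    exact ⟨φ.comp ψ₀, fun x => by simp [h]⟩
  | succ n ih =>
    intro s
    exact isDiffOp_congr (fun x => by simp [map_sub, map_smul]) (ih (hψ s))

lemma isDiffOp_comp {m : ℕ} {φ : M → P} (hadd : ∀ a b, φ (a + b) = φ a + φ b)
    (hφ : IsDiffOp S m φ) :
    ∀ {n : ℕ} {ψ : N → M}, IsDiffOp S n ψ → IsDiffOp S (m + n) (fun x => φ (ψ x)) := by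
  induction m generalizing φ with
  | zero =>
    intro n ψ hψ
    obtain ⟨φ₀, h⟩ := hφ
    rw [Nat.zero_add]
    exact isDiffOp_congr (fun x => (h (ψ x)).symm) (isDiffOp_comp_linear φ₀ hψ)
  | succ m ih =>
    intro n ψ hψ
    induction n generalizing ψ with
    | zero =>
      obtain ⟨ψ₀, h⟩ := hψ
      intro s
      have key : IsDiffOp S (m + 0) (fun x => (fun y => φ (s • y) - s • φ y) (ψ x)) :=
        ih (comm_additive hadd s) (hφ s) ⟨ψ₀, h⟩
      refine isDiffOp_congr (fun x => ?_) key
      have : ψ (s • x) = s • ψ x := by rw [h, h, map_smul]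
      simp only [this]
    | succ n ihn =>
      intro s
      have h1 : IsDiffOp S (m + 1 + n) (fun x => φ ((fun y => ψ (s • y) - s • ψ y) x)) :=
        ihn (hψ s)
      have h2 : IsDiffOp S (m + (n + 1)) (fun x => (fun y => φ (s • y) - s • φ y) (ψ x)) :=
        ih (comm_additive hadd s) (hφ s) hψ
      have e : m + (n + 1) = m + 1 + n := by omega
      rw [e] at h2
      refine isDiffOp_congr (fun x => ?_) (isDiffOp_add h1 h2)
      simp only [additive_sub hadd]
      abel

end Aux

section DiffOpsLemmas

variable {k R : Type*} [CommRing k] [CommRing R] [Algebra k R]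

lemma id_mem_diffOps : (fun x : R => x) ∈ DiffOps k R :=
  ⟨⟨fun _ _ => rfl, fun _ _ => rfl⟩, 0, LinearMap.id, fun _ => rfl⟩

lemma mulLeft_mem_diffOps (r : R) : (fun x : R => r * x) ∈ DiffOps k R := by
  refine ⟨⟨fun a b => by ring, fun c a => ?_⟩, 0, LinearMap.lsmul R R r, fun x => ?_⟩
  · rw [Algebra.smul_def, Algebra.smul_def]; ring
  · simp [LinearMap.lsmul, smul_eq_mul]

lemma comp_mem_diffOps {δ δ' : R → R} (hδ : δ ∈ DiffOps k R) (hδ' : δ' ∈ DiffOps k R) :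
    (fun x => δ (δ' x)) ∈ DiffOps k R := by
  obtain ⟨hlin, n, hn⟩ := hδ
  obtain ⟨hlin', n', hn'⟩ := hδ'
  exact ⟨⟨fun a b => by rw [hlin'.map_add, hlin.map_add],
      fun c a => by rw [hlin'.map_smul, hlin.map_smul]⟩,
    n + n', isDiffOp_comp hlin.map_add hn hn'⟩

end DiffOpsLemmas

/-- `𝓜_R = {x | δ x ∈ m for all δ ∈ D_k(R)}` is a proper ideal which is a
`D_k(R)`-submodule of `R` containing every proper `D_k(R)`-submodule; in particular `R`
is `D_k(R)`-simple iff `𝓜_R = 0`. -/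
theorem stmt3 {k R : Type*} [Field k] [CommRing R] [Algebra k R] [IsLocalRing R] :
    let MR : Set R :=
      {x | ∀ δ ∈ DiffOps k R, δ x ∈ IsLocalRing.maximalIdeal R}
    (1 : R) ∉ MR ∧
    (∀ x ∈ MR, ∀ y ∈ MR, x + y ∈ MR) ∧
    (∀ r : R, ∀ x ∈ MR, r * x ∈ MR) ∧
    (∀ δ ∈ DiffOps k R, ∀ x ∈ MR, δ x ∈ MR) ∧
    (∀ I : Ideal R, I ≠ ⊤ → (∀ δ ∈ DiffOps k R, ∀ x ∈ I, δ x ∈ I) → (I : Set R) ⊆ MR) ∧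
    ((∀ I : Ideal R, (∀ δ ∈ DiffOps k R, ∀ x ∈ I, δ x ∈ I) → I = ⊥ ∨ I = ⊤) ↔
      MR = {0}) := by
  intro MR
  have hone : (1 : R) ∉ MR := by
    intro h
    have := h _ (id_mem_diffOps (k := k))
    exact (IsLocalRing.maximalIdeal.isMaximal R).ne_top
      ((Ideal.eq_top_iff_one _).mpr this)
  have hadd : ∀ x ∈ MR, ∀ y ∈ MR, x + y ∈ MR := by
    intro x hx y hy δ hδ
    rw [hδ.1.map_add]
    exact Ideal.add_mem _ (hx δ hδ) (hy δ hδ)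
  have hmul : ∀ r : R, ∀ x ∈ MR, r * x ∈ MR := by
    intro r x hx δ hδ
    have := hx _ (comp_mem_diffOps hδ (mulLeft_mem_diffOps r))
    exact this
  have hstab : ∀ δ ∈ DiffOps k R, ∀ x ∈ MR, δ x ∈ MR := by
    intro δ hδ x hx δ' hδ'
    exact hx _ (comp_mem_diffOps hδ' hδ)
  have hmax : ∀ I : Ideal R, I ≠ ⊤ → (∀ δ ∈ DiffOps k R, ∀ x ∈ I, δ x ∈ I) →
      (I : Set R) ⊆ MR := by
    intro I hI hIstab x hx δ hδ
    exact IsLocalRing.le_maximalIdeal hI (hIstab δ hδ x hx)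
  have hzero : (0 : R) ∈ MR := by
    intro δ hδ
    rw [hδ.1.map_zero]
    exact Ideal.zero_mem _
  refine ⟨hone, hadd, hmul, hstab, hmax, ?_, ?_⟩
  · intro h
    set J : Ideal R :=
      { carrier := MR
        add_mem' := fun ha hb => hadd _ ha _ hb
        zero_mem' := hzero
        smul_mem' := fun r x hx => by simpa [smul_eq_mul] using hmul r x hx } with hJ
    have hJstab : ∀ δ ∈ DiffOps k R, ∀ x ∈ J, δ x ∈ J := fun δ hδ x hx => hstab δ hδ x hx
    rcases h J hJstab with hbot | htop
    · ext x
      constructor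
      · intro hx
        have : x ∈ J := hx
        rw [hbot] at this
        simpa using this
      · intro hx
        simp only [Set.mem_singleton_iff] at hx
        subst hx
        exact hzero
    · exact absurd ((Ideal.eq_top_iff_one J).mp htop) hone
  · intro hMR I hIstab
    by_cases hI : I = ⊤
    · exact Or.inr hI
    · left
      rw [eq_bot_iff]
      intro x hx
      have : x ∈ MR := hmax I hI hIstab hx
      rw [hMR] at this
      simpa using this
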